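/- An si-logic L has degree of fmp equal to 1 if and only if L has the finite model property and is axiomatizable by Jankov formulas. -/

import Mathlib

/-- Intuitionistic propositional formulas over variables `p₀, p₁, …`. -/
inductive IForm : Type
  | var : ℕ → IForm
  | bot : IForm
  | and : IForm → IForm → IForm
  | or : IForm → IForm → IForm
  | imp : IForm → IForm → IForm

namespace IForm

/-- Uniform substitution. -/
def subst (σ : ℕ → IForm) : IForm → IForm
  | var n => σ n
  | bot => bot
  | and φ ψ => and (subst σ φ) (subst σ ψ)
  | or φ ψ => or (subst σ φ) (subst σ ψ)
  | imp φ ψ => imp (subst σ φ) (subst σ ψ)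

/-- Biconditional `φ ↔ ψ`. -/
def biimp (φ ψ : IForm) : IForm := and (imp φ ψ) (imp ψ φ)

end IForm

/-- The theorems of the intuitionistic propositional calculus `IPC`, given by a
standard Hilbert-style axiomatization (all axioms are schemes, so `IPC` is
closed under uniform substitution) together with modus ponens. -/
inductive IPC : IForm → Prop
  | ax1 (φ ψ : IForm) : IPC (φ.imp (ψ.imp φ))
  | ax2 (φ ψ χ : IForm) : IPC ((φ.imp (ψ.imp χ)).imp ((φ.imp ψ).imp (φ.imp χ)))
  | andE1 (φ ψ : IForm) : IPC ((φ.and ψ).imp φ)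
  | andE2 (φ ψ : IForm) : IPC ((φ.and ψ).imp ψ)
  | andI (φ ψ : IForm) : IPC (φ.imp (ψ.imp (φ.and ψ)))
  | orI1 (φ ψ : IForm) : IPC (φ.imp (φ.or ψ))
  | orI2 (φ ψ : IForm) : IPC (ψ.imp (φ.or ψ))
  | orE (φ ψ χ : IForm) : IPC ((φ.imp χ).imp ((ψ.imp χ).imp ((φ.or ψ).imp χ)))
  | exfalso (φ : IForm) : IPC (IForm.bot.imp φ)
  | mp (φ ψ : IForm) : IPC (φ.imp ψ) → IPC φ → IPC ψ

/-- A superintuitionistic logic: a set of formulas containing `IPC` and closed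
under modus ponens and uniform substitution. -/
def SuperIntuitionistic (L : Set IForm) : Prop :=
  (∀ φ, IPC φ → φ ∈ L) ∧
  (∀ φ ψ, φ.imp ψ ∈ L → φ ∈ L → ψ ∈ L) ∧
  (∀ φ (σ : ℕ → IForm), φ ∈ L → φ.subst σ ∈ L)
/-- Kripke forcing on a poset, relative to a valuation by upsets. -/
def Forces {X : Type} [Preorder X] (v : ℕ → Set X) : X → IForm → Prop
  | x, .var n => x ∈ v n
  | _, .bot => False
  | x, .and φ ψ => Forces v x φ ∧ Forces v x ψ
  | x, .or φ ψ => Forces v x φ ∨ Forces v x ψ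
  | x, .imp φ ψ => ∀ y, x ≤ y → Forces v y φ → Forces v y ψ

/-- A formula is valid in a poset if it is forced at every point under every
valuation by upsets. -/
def ValidIn (X : Type) [Preorder X] (φ : IForm) : Prop :=
  ∀ v : ℕ → Set X, (∀ n, IsUpperSet (v n)) → ∀ x : X, Forces v x φ

/-- A poset validates a logic if every formula of the logic is valid in it. -/
def ValidLogic (X : Type) [Preorder X] (L : Set IForm) : Prop :=
  ∀ φ ∈ L, ValidIn X φ

/-- `Fin(L) = Fin(L')`: the two logics are validated by the same finite posets. -/
def SameFinPosets (L L' : Set IForm) : Prop :=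
  ∀ (X : Type) [Fintype X] [PartialOrder X], ValidLogic X L ↔ ValidLogic X L'

/-- The fmp span of a logic: the si-logics validated by the same finite posets. -/
def fmpSpan (L : Set IForm) : Set (Set IForm) :=
  {L' | SuperIntuitionistic L' ∧ SameFinPosets L L'}

/-- The degree of the finite model property of a logic. -/
def degFmp (L : Set IForm) : Cardinal :=
  Cardinal.mk (fmpSpan L)
/-- `IPC + Ax`: the least si-logic containing `Ax`. -/
def IPCPlus (Ax : Set IForm) : Set IForm :=
  {φ | ∀ L : Set IForm, SuperIntuitionistic L → Ax ⊆ L → φ ∈ L}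
/-- The upsets of a preorder. -/
abbrev Ups (X : Type) [Preorder X] : Type := {U : Set X // IsUpperSet U}

/-- Intersection of upsets. -/
def upsInter {X : Type} [Preorder X] (U V : Ups X) : Ups X := ⟨U.1 ∩ V.1, U.2.inter V.2⟩

/-- Union of upsets. -/
def upsUnion {X : Type} [Preorder X] (U V : Ups X) : Ups X := ⟨U.1 ∪ V.1, U.2.union V.2⟩

/-- Heyting implication of upsets: `U → V = {x : ↑x ∩ U ⊆ V}`. -/
def upsHimp {X : Type} [Preorder X] (U V : Ups X) : Ups X :=
  ⟨{x | ∀ y, x ≤ y → y ∈ U.1 → y ∈ V.1}, by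
    intro a b hab ha y hby hyU
    exact ha y (le_trans hab hby) hyU⟩

/-- The empty upset. -/
def upsEmpty {X : Type} [Preorder X] : Ups X := ⟨∅, isUpperSet_empty⟩

/-- Finite conjunction. -/
def bigConj : List IForm → IForm
  | [] => IForm.bot.imp IForm.bot
  | φ :: l => φ.and (bigConj l)

/-- The Jankov formula of a finite rooted poset `X` with root `r`: choosing a
distinct variable `p_U` for each upset `U` of `X`, it is `δ → p_s`, where `δ`
is the conjunction of `p_{U∩V} ↔ p_U ∧ p_V`, `p_{U∪V} ↔ p_U ∨ p_V`,
`p_{U→V} ↔ (p_U → p_V)` over all upsets `U, V`, together with `p_∅ ↔ ⊥`, and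
`s = X ∖ {r}` is the second largest element of `Up(X)`. -/
noncomputable def jankov (X : Type) [Fintype X] [PartialOrder X] (r : X)
    (hr : ∀ x, r ≤ x) : IForm :=
  letI : Fintype (Ups X) := Fintype.ofFinite _
  let e : Ups X ≃ Fin (Fintype.card (Ups X)) := Fintype.equivFin (Ups X)
  let p : Ups X → IForm := fun U => IForm.var (e U).val
  let all : List (Ups X) := (List.finRange (Fintype.card (Ups X))).map e.symm
  let triple : Ups X → Ups X → IForm := fun U V =>
    ((p (upsInter U V)).biimp ((p U).and (p V))).and
      (((p (upsUnion U V)).biimp ((p U).or (p V))).and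
        ((p (upsHimp U V)).biimp ((p U).imp (p V))))
  let δ : IForm :=
    (bigConj (all.map fun U => bigConj (all.map fun V => triple U V))).and
      ((p upsEmpty).biimp IForm.bot)
  let s : Ups X := ⟨Set.univ \ {r}, by
    intro a b hab ha
    simp only [Set.mem_diff, Set.mem_univ, Set.mem_singleton_iff, true_and] at ha ⊢
    intro hb
    exact ha (le_antisymm (hb ▸ hab) (hr a))⟩
  δ.imp (p s)

/-- A formula is a Jankov formula if it is the Jankov formula of some finite
rooted poset. -/
def IsJankovFormula (φ : IForm) : Prop :=
  ∃ (X : Type) (i1 : Fintype X) (i2 : PartialOrder X) (r : X)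
    (hr : ∀ x : X, i2.le r x), φ = @jankov X i1 i2 r hr
/-- An si-logic is axiomatizable by Jankov formulas if it is the least si-logic
containing some set of Jankov formulas of finite rooted posets. -/
def JankovAxiomatizable (L : Set IForm) : Prop :=
  ∃ Ax : Set IForm, (∀ φ ∈ Ax, IsJankovFormula φ) ∧ L = IPCPlus Ax
/-- `L⁺ = Log(Fin(L))`: the logic of the finite posets validating `L`. -/
def LPlus (L : Set IForm) : Set IForm :=
  {φ | ∀ (X : Type) [Fintype X] [PartialOrder X], ValidLogic X L → ValidIn X φ}

/-- A logic has the finite model property if it is the logic of its finite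
posets. -/
def HasFMP (L : Set IForm) : Prop := L = LPlus L


/-! ### Auxiliary lemmas -/

section Semantics

variable {X : Type} [Preorder X]

/-- Persistence: forcing is monotone along the order. -/
lemma forces_mono {v : ℕ → Set X} (hv : ∀ n, IsUpperSet (v n)) :
    ∀ (φ : IForm) {x y : X}, x ≤ y → Forces v x φ → Forces v y φ
  | .var n, x, y, hxy, h => hv n hxy h
  | .bot, _, _, _, h => h.elim
  | .and φ ψ, x, y, hxy, h =>
    ⟨forces_mono hv φ hxy h.1, forces_mono hv ψ hxy h.2⟩
  | .or φ ψ, x, y, hxy, h =>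
    h.elim (fun h => Or.inl (forces_mono hv φ hxy h))
      (fun h => Or.inr (forces_mono hv ψ hxy h))
  | .imp φ ψ, x, y, hxy, h => fun z hz => h z (le_trans hxy hz)

/-- The set of points forcing a formula is an upset. -/
lemma isUpperSet_forces {v : ℕ → Set X} (hv : ∀ n, IsUpperSet (v n)) (φ : IForm) :
    IsUpperSet {x : X | Forces v x φ} :=
  fun _ _ hxy h => forces_mono hv φ hxy h

/-- Soundness of `IPC` on posets. -/
lemma ipc_validIn {φ : IForm} (h : IPC φ) : ValidIn X φ := by
  induction h with
  | ax1 φ ψ => intro v hv x y _ h z hz _; exact forces_mono hv φ hz h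
  | ax2 φ ψ χ =>
      intro v hv x y _ h1 z hz h2 w hw h3
      exact h1 w (le_trans hz hw) h3 w le_rfl (h2 w hw h3)
  | andE1 φ ψ => intro v hv x y _ h; exact h.1
  | andE2 φ ψ => intro v hv x y _ h; exact h.2
  | andI φ ψ =>
      intro v hv x y _ h z hz h2
      exact ⟨forces_mono hv φ hz h, h2⟩
  | orI1 φ ψ => intro v hv x y _ h; exact Or.inl h
  | orI2 φ ψ => intro v hv x y _ h; exact Or.inr h
  | orE φ ψ χ =>
      intro v hv x y _ h1 z hz h2 w hw h3
      exact h3.elim (fun h => h1 w (le_trans hz hw) h)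
        (fun h => h2 w hw h)
  | exfalso φ => intro v hv x y _ h; exact h.elim
  | mp φ ψ h1 h2 ih1 ih2 =>
      intro v hv x
      exact ih1 v hv x x le_rfl (ih2 v hv x)

/-- Semantics of substitution. -/
lemma forces_subst {v : ℕ → Set X} (σ : ℕ → IForm) :
    ∀ (φ : IForm) (x : X),
      Forces v x (φ.subst σ) ↔ Forces (fun n => {y | Forces v y (σ n)}) x φ
  | .var n, x => Iff.rfl
  | .bot, x => Iff.rfl
  | .and φ ψ, x => and_congr (forces_subst σ φ x) (forces_subst σ ψ x)
  | .or φ ψ, x => or_congr (forces_subst σ φ x) (forces_subst σ ψ x)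
  | .imp φ ψ, x => by
      constructor
      · intro h y hy hφ
        exact (forces_subst σ ψ y).1 (h y hy ((forces_subst σ φ y).2 hφ))
      · intro h y hy hφ
        exact (forces_subst σ ψ y).2 (h y hy ((forces_subst σ φ y).1 hφ))

lemma validIn_subst {φ : IForm} (h : ValidIn X φ) (σ : ℕ → IForm) :
    ValidIn X (φ.subst σ) := by
  intro v hv x
  exact (forces_subst σ φ x).2
    (h _ (fun n => isUpperSet_forces hv (σ n)) x)

/-- The logic of a single poset is superintuitionistic. -/
lemma superIntuitionistic_log (X : Type) [Preorder X] :
    SuperIntuitionistic {φ | ValidIn X φ} := by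
  refine ⟨fun φ h => ipc_validIn h, ?_, ?_⟩
  · intro φ ψ h1 h2 v hv x
    exact h1 v hv x x le_rfl (h2 v hv x)
  · intro φ σ h
    exact validIn_subst h σ

end Semantics

set_option linter.unusedVariables false

section Derivations

/-- Derivability from a list of hypotheses. -/
inductive Der : List IForm → IForm → Prop
  | ax {Γ φ} : IPC φ → Der Γ φ
  | hyp {Γ φ} : φ ∈ Γ → Der Γ φ
  | mp {Γ} (φ ψ) : Der Γ (φ.imp ψ) → Der Γ φ → Der Γ ψ

namespace Der

lemma weak {Γ Γ' : List IForm} {φ} (h : Der Γ φ) (hs : ∀ ψ ∈ Γ, ψ ∈ Γ') :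
    Der Γ' φ := by
  induction h with
  | ax h => exact ax h
  | hyp h => exact hyp (hs _ h)
  | mp φ ψ h1 h2 ih1 ih2 => exact mp φ ψ ih1 ih2

lemma ipc_id (φ : IForm) : IPC (φ.imp φ) :=
  IPC.mp _ _ (IPC.mp _ _ (IPC.ax2 φ (φ.imp φ) φ) (IPC.ax1 φ (φ.imp φ)))
    (IPC.ax1 φ φ)

/-- Deduction theorem. -/
lemma ded {Γ : List IForm} {φ ψ : IForm} (h : Der (φ :: Γ) ψ) : Der Γ (φ.imp ψ) := by
  induction h with
  | ax h => exact mp _ _ (ax (IPC.ax1 _ _)) (ax h)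
  | hyp h =>
      rcases List.mem_cons.1 h with rfl | h
      · exact ax (ipc_id _)
      · exact mp _ _ (ax (IPC.ax1 _ _)) (hyp h)
  | mp χ θ h1 h2 ih1 ih2 =>
      exact mp _ _ (mp _ _ (ax (IPC.ax2 _ _ _)) ih1) ih2

lemma unded {Γ : List IForm} {φ ψ : IForm} (h : Der Γ (φ.imp ψ)) : Der (φ :: Γ) ψ :=
  mp _ _ (h.weak fun χ hχ => List.mem_cons_of_mem _ hχ) (hyp (List.mem_cons_self))

lemma andE1 {Γ} {φ ψ : IForm} (h : Der Γ (φ.and ψ)) : Der Γ φ :=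
  mp _ _ (ax (IPC.andE1 _ _)) h

lemma andE2 {Γ} {φ ψ : IForm} (h : Der Γ (φ.and ψ)) : Der Γ ψ :=
  mp _ _ (ax (IPC.andE2 _ _)) h

lemma andI {Γ} {φ ψ : IForm} (h1 : Der Γ φ) (h2 : Der Γ ψ) : Der Γ (φ.and ψ) :=
  mp _ _ (mp _ _ (ax (IPC.andI _ _)) h1) h2

lemma orI1 {Γ} {φ : IForm} (ψ) (h : Der Γ φ) : Der Γ (φ.or ψ) :=
  mp _ _ (ax (IPC.orI1 _ _)) h

lemma orI2 {Γ} (φ : IForm) {ψ} (h : Der Γ ψ) : Der Γ (φ.or ψ) :=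
  mp _ _ (ax (IPC.orI2 _ _)) h

lemma orE {Γ} {φ ψ χ : IForm} (h : Der Γ (φ.or ψ)) (h1 : Der (φ :: Γ) χ)
    (h2 : Der (ψ :: Γ) χ) : Der Γ χ :=
  mp _ _ (mp _ _ (mp _ _ (ax (IPC.orE _ _ _)) h1.ded) h2.ded) h

lemma exfalso {Γ} (φ : IForm) (h : Der Γ IForm.bot) : Der Γ φ :=
  mp _ _ (ax (IPC.exfalso _)) h

lemma biimpI {Γ} {φ ψ : IForm} (h1 : Der Γ (φ.imp ψ)) (h2 : Der Γ (ψ.imp φ)) :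
    Der Γ (φ.biimp ψ) := andI h1 h2

lemma biimp1 {Γ} {φ ψ : IForm} (h : Der Γ (φ.biimp ψ)) : Der Γ (φ.imp ψ) := andE1 h

lemma biimp2 {Γ} {φ ψ : IForm} (h : Der Γ (φ.biimp ψ)) : Der Γ (ψ.imp φ) := andE2 h

lemma biimp_refl {Γ} (φ : IForm) : Der Γ (φ.biimp φ) :=
  biimpI (ax (ipc_id _)) (ax (ipc_id _))

lemma biimp_symm {Γ} {φ ψ : IForm} (h : Der Γ (φ.biimp ψ)) : Der Γ (ψ.biimp φ) :=
  biimpI (biimp2 h) (biimp1 h)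

lemma imp_trans {Γ} {φ ψ χ : IForm} (h1 : Der Γ (φ.imp ψ)) (h2 : Der Γ (ψ.imp χ)) :
    Der Γ (φ.imp χ) := by
  apply ded
  exact mp _ _ (h2.weak fun _ h => List.mem_cons_of_mem _ h) h1.unded

lemma biimp_trans {Γ} {φ ψ χ : IForm} (h1 : Der Γ (φ.biimp ψ)) (h2 : Der Γ (ψ.biimp χ)) :
    Der Γ (φ.biimp χ) :=
  biimpI (imp_trans (biimp1 h1) (biimp1 h2)) (imp_trans (biimp2 h2) (biimp2 h1))

lemma mp_biimp {Γ} {φ ψ : IForm} (h : Der Γ (φ.biimp ψ)) (h1 : Der Γ φ) : Der Γ ψ :=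
  mp _ _ (biimp1 h) h1

lemma and_congr {Γ} {φ φ' ψ ψ' : IForm} (h1 : Der Γ (φ.biimp φ'))
    (h2 : Der Γ (ψ.biimp ψ')) : Der Γ ((φ.and ψ).biimp (φ'.and ψ')) := by
  have half : ∀ {a a' b b' : IForm}, Der Γ (a.imp a') → Der Γ (b.imp b') →
      Der Γ ((a.and b).imp (a'.and b')) := by
    intro a a' b b' ha hb
    apply ded
    have hab : Der (a.and b :: Γ) (a.and b) := hyp (List.mem_cons_self)
    have wa : Der (a.and b :: Γ) (a.imp a') := ha.weak (fun _ h => List.mem_cons_of_mem _ h)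
    have wb : Der (a.and b :: Γ) (b.imp b') := hb.weak (fun _ h => List.mem_cons_of_mem _ h)
    exact andI (mp _ _ wa hab.andE1) (mp _ _ wb hab.andE2)
  exact biimpI (half (biimp1 h1) (biimp1 h2)) (half (biimp2 h1) (biimp2 h2))

lemma or_congr {Γ} {φ φ' ψ ψ' : IForm} (h1 : Der Γ (φ.biimp φ'))
    (h2 : Der Γ (ψ.biimp ψ')) : Der Γ ((φ.or ψ).biimp (φ'.or ψ')) := by
  have half : ∀ {a a' b b' : IForm}, Der Γ (a.imp a') → Der Γ (b.imp b') →
      Der Γ ((a.or b).imp (a'.or b')) := by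
    intro a a' b b' ha hb
    apply ded
    refine orE (hyp (List.mem_cons_self)) ?_ ?_
    · have wa : Der (a :: a.or b :: Γ) (a.imp a') :=
        ha.weak fun _ h => List.mem_cons_of_mem _ (List.mem_cons_of_mem _ h)
      exact orI1 _ (mp _ _ wa (hyp (List.mem_cons_self)))
    · have wb : Der (b :: a.or b :: Γ) (b.imp b') :=
        hb.weak fun _ h => List.mem_cons_of_mem _ (List.mem_cons_of_mem _ h)
      exact orI2 _ (mp _ _ wb (hyp (List.mem_cons_self)))
  exact biimpI (half (biimp1 h1) (biimp1 h2)) (half (biimp2 h1) (biimp2 h2))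

lemma imp_congr {Γ} {φ φ' ψ ψ' : IForm} (h1 : Der Γ (φ.biimp φ'))
    (h2 : Der Γ (ψ.biimp ψ')) : Der Γ ((φ.imp ψ).biimp (φ'.imp ψ')) := by
  have half : ∀ {a a' b b' : IForm}, Der Γ (a'.imp a) → Der Γ (b.imp b') →
      Der Γ ((a.imp b).imp (a'.imp b')) := by
    intro a a' b b' ha hb
    apply ded; apply ded
    have hmem : ∀ χ ∈ Γ, χ ∈ a' :: a.imp b :: Γ := by
      intro χ h; exact List.mem_cons_of_mem _ (List.mem_cons_of_mem _ h)
    have hha' : Der (a' :: a.imp b :: Γ) a' := hyp (List.mem_cons_self)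
    have hha : Der (a' :: a.imp b :: Γ) a := mp _ _ (ha.weak hmem) hha'
    have hb' : Der (a' :: a.imp b :: Γ) b :=
      mp _ _ (hyp (List.mem_cons_of_mem _ (List.mem_cons_self))) hha
    exact mp _ _ (hb.weak hmem) hb'
  exact biimpI (half (biimp2 h1) (biimp1 h2)) (half (biimp1 h1) (biimp2 h2))

end Der

/-- Extracting a member of a big conjunction. -/
lemma der_of_bigConj {Γ} {l : List IForm} (h : Der Γ (bigConj l)) {φ}
    (hφ : φ ∈ l) : Der Γ φ := by
  induction l with
  | nil => simp at hφ
  | cons ψ l ih =>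
      rcases List.mem_cons.1 hφ with rfl | hφ
      · exact (show Der Γ (φ.and (bigConj l)) from h).andE1
      · exact ih ((show Der Γ (ψ.and (bigConj l)) from h).andE2) hφ

lemma der_nil_ipc {φ} (h : Der [] φ) : IPC φ := by
  induction h with
  | ax h => exact h
  | hyp h => simp at h
  | mp φ ψ h1 h2 ih1 ih2 => exact IPC.mp _ _ ih1 ih2

end Derivations

section JankovGen

/-- The second-largest upset of a rooted poset. -/
def upsTop {X : Type} [PartialOrder X] (r : X) (hr : ∀ x, r ≤ x) : Ups X :=
  ⟨Set.univ \ {r}, by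
    intro a b hab ha
    simp only [Set.mem_diff, Set.mem_univ, Set.mem_singleton_iff, true_and] at ha ⊢
    intro hb
    exact ha (le_antisymm (hb ▸ hab) (hr a))⟩

/-- The Jankov formula relative to an arbitrary choice of variables and an
arbitrary enumeration of the upsets. -/
def jankovGen (X : Type) [PartialOrder X] (q : Ups X → ℕ) (all : List (Ups X))
    (r : X) (hr : ∀ x, r ≤ x) : IForm :=
  let p : Ups X → IForm := fun U => IForm.var (q U)
  let triple : Ups X → Ups X → IForm := fun U V =>
    ((p (upsInter U V)).biimp ((p U).and (p V))).and
      (((p (upsUnion U V)).biimp ((p U).or (p V))).and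
        ((p (upsHimp U V)).biimp ((p U).imp (p V))))
  let δ : IForm :=
    (bigConj (all.map fun U => bigConj (all.map fun V => triple U V))).and
      ((p upsEmpty).biimp IForm.bot)
  δ.imp (p (upsTop r hr))

lemma jankov_spec (X : Type) [Fintype X] [PartialOrder X] (r : X)
    (hr : ∀ x, r ≤ x) :
    ∃ (q : Ups X → ℕ) (all : List (Ups X)), Function.Injective q ∧
      (∀ U, U ∈ all) ∧ jankov X r hr = jankovGen X q all r hr := by
  letI : Fintype (Ups X) := Fintype.ofFinite _
  refine ⟨fun U => ((Fintype.equivFin (Ups X)) U).val,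
    (List.finRange (Fintype.card (Ups X))).map (Fintype.equivFin (Ups X)).symm,
    ?_, ?_, rfl⟩
  · exact fun U V h => (Fintype.equivFin (Ups X)).injective (Fin.val_injective h)
  · intro U
    exact List.mem_map.2 ⟨Fintype.equivFin (Ups X) U, List.mem_finRange _, by simp⟩

end JankovGen

section JankovSyntactic

variable {X : Type} [PartialOrder X]

/-- The variable attached to an upset. -/
def jp (q : Ups X → ℕ) (U : Ups X) : IForm := IForm.var (q U)

def jtriple (q : Ups X → ℕ) (U V : Ups X) : IForm :=
  ((jp q (upsInter U V)).biimp ((jp q U).and (jp q V))).and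
    (((jp q (upsUnion U V)).biimp ((jp q U).or (jp q V))).and
      ((jp q (upsHimp U V)).biimp ((jp q U).imp (jp q V))))

def jdelta (q : Ups X → ℕ) (all : List (Ups X)) : IForm :=
  (bigConj (all.map fun U => bigConj (all.map fun V => jtriple q U V))).and
    ((jp q upsEmpty).biimp IForm.bot)

lemma jankovGen_eq (q : Ups X → ℕ) (all : List (Ups X)) (r : X)
    (hr : ∀ x, r ≤ x) :
    jankovGen X q all r hr = (jdelta q all).imp (jp q (upsTop r hr)) := rfl

variable (q : Ups X → ℕ) (all : List (Ups X))

lemma der_delta_triple (hall : ∀ U, U ∈ all) (U V : Ups X) : Der [jdelta q all] (jtriple q U V) := by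
  have hδ : Der [jdelta q all] (jdelta q all) := Der.hyp (List.mem_cons_self)
  have h1 := hδ.andE1
  have row := der_of_bigConj h1
    (List.mem_map.2 ⟨U, hall U, rfl⟩)
  exact der_of_bigConj row (List.mem_map.2 ⟨V, hall V, rfl⟩)

lemma der_delta_inter (hall : ∀ U, U ∈ all) (U V : Ups X) :
    Der [jdelta q all] ((jp q (upsInter U V)).biimp ((jp q U).and (jp q V))) :=
  (der_delta_triple q all hall U V).andE1

lemma der_delta_union (hall : ∀ U, U ∈ all) (U V : Ups X) :
    Der [jdelta q all] ((jp q (upsUnion U V)).biimp ((jp q U).or (jp q V))) :=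
  (der_delta_triple q all hall U V).andE2.andE1

lemma der_delta_himp (hall : ∀ U, U ∈ all) (U V : Ups X) :
    Der [jdelta q all] ((jp q (upsHimp U V)).biimp ((jp q U).imp (jp q V))) :=
  (der_delta_triple q all hall U V).andE2.andE2

lemma der_delta_bot : Der [jdelta q all] ((jp q upsEmpty).biimp IForm.bot) :=
  (Der.hyp (List.mem_cons_self) : Der [jdelta q all] (jdelta q all)).andE2

lemma der_delta_mono (hall : ∀ U, U ∈ all) {U V : Ups X} (h : U.1 ⊆ V.1) :
    Der [jdelta q all] ((jp q U).imp (jp q V)) := by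
  have he : upsInter U V = U := Subtype.ext (Set.inter_eq_left.mpr h)
  have h1 := der_delta_inter q all hall U V
  rw [he] at h1
  exact Der.imp_trans h1.biimp1 (Der.ax (IPC.andE2 _ _))

variable (v : ℕ → Set X) (hv : ∀ n, IsUpperSet (v n))

/-- The upset of points forcing a formula. -/
def fset (ψ : IForm) : Ups X := ⟨{x | Forces v x ψ}, isUpperSet_forces hv ψ⟩

/-- The substitution sending each variable to the variable of its valuation. -/
def jsub : ℕ → IForm := fun n => IForm.var (q ⟨v n, hv n⟩)

lemma der_delta_subst (hall : ∀ U, U ∈ all) :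
    ∀ ψ : IForm, Der [jdelta q all] ((ψ.subst (jsub q v hv)).biimp
      (jp q (fset v hv ψ)))
  | .var n => by
      have he : fset v hv (IForm.var n) = ⟨v n, hv n⟩ := Subtype.ext rfl
      rw [he]
      exact Der.biimp_refl _
  | .bot => by
      have he : fset v hv IForm.bot = upsEmpty := Subtype.ext rfl
      rw [he]
      exact (der_delta_bot q all).biimp_symm
  | .and ψ1 ψ2 => by
      have he : fset v hv (ψ1.and ψ2) = upsInter (fset v hv ψ1) (fset v hv ψ2) :=
        Subtype.ext rfl
      rw [he]
      exact Der.biimp_trans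
        (Der.and_congr (der_delta_subst hall ψ1) (der_delta_subst hall ψ2))
        (der_delta_inter q all hall _ _).biimp_symm
  | .or ψ1 ψ2 => by
      have he : fset v hv (ψ1.or ψ2) = upsUnion (fset v hv ψ1) (fset v hv ψ2) :=
        Subtype.ext rfl
      rw [he]
      exact Der.biimp_trans
        (Der.or_congr (der_delta_subst hall ψ1) (der_delta_subst hall ψ2))
        (der_delta_union q all hall _ _).biimp_symm
  | .imp ψ1 ψ2 => by
      have he : fset v hv (ψ1.imp ψ2) = upsHimp (fset v hv ψ1) (fset v hv ψ2) :=
        Subtype.ext rfl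
      rw [he]
      exact Der.biimp_trans
        (Der.imp_congr (der_delta_subst hall ψ1) (der_delta_subst hall ψ2))
        (der_delta_himp q all hall _ _).biimp_symm

end JankovSyntactic

/-- **Jankov's lemma, syntactic direction**: if a finite rooted poset refutes
some theorem of a superintuitionistic logic `M`, then its Jankov formula
belongs to `M`. -/
lemma jankov_mem_of_refutes {X : Type} [Fintype X] [PartialOrder X] (r : X)
    (hr : ∀ x, r ≤ x) {M : Set IForm} (hM : SuperIntuitionistic M) {φ : IForm}
    (hφ : φ ∈ M) (v : ℕ → Set X) (hv : ∀ n, IsUpperSet (v n)) (x0 : X)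
    (hx0 : ¬ Forces v x0 φ) : jankov X r hr ∈ M := by
  obtain ⟨q, all, hq, hall, heq⟩ := jankov_spec X r hr
  rw [heq, jankovGen_eq]
  have hmain := der_delta_subst q all v hv hall φ
  have hss : (fset v hv φ).1 ⊆ (upsTop r hr).1 := by
    intro x hx
    refine ⟨trivial, fun hxr => hx0 ?_⟩
    have : Forces v r φ := by
      rw [Set.mem_singleton_iff] at hxr
      exact hxr ▸ hx
    exact forces_mono hv φ (hr x0) this
  have hmono := der_delta_mono q all hall hss
  have final : Der [jdelta q all]
      ((φ.subst (jsub q v hv)).imp (jp q (upsTop r hr))) :=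
    Der.imp_trans hmain.biimp1 hmono
  have final2 : Der [jdelta q all, φ.subst (jsub q v hv)] (jp q (upsTop r hr)) :=
    Der.mp _ _ (final.weak fun _ h => List.mem_cons.2 (Or.inl (by simpa using h)))
    (Der.hyp (List.mem_cons_of_mem _ (List.mem_cons_self)))
  have final4 : IPC ((φ.subst (jsub q v hv)).imp
      ((jdelta q all).imp (jp q (upsTop r hr)))) := by
    exact der_nil_ipc final2.ded.ded
  exact hM.2.1 _ _ (hM.1 _ final4) (hM.2.2 φ _ hφ)

section JankovSemantic

lemma forces_bigConj {Y : Type} [Preorder Y] {w : ℕ → Set Y} {y : Y} :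
    ∀ {l : List IForm}, Forces w y (bigConj l) ↔ ∀ φ ∈ l, Forces w y φ
  | [] => by
      simp only [bigConj, List.not_mem_nil, false_implies, implies_true, iff_true]
      intro z _ h
      exact h
  | φ :: l => by
      simp only [bigConj, List.mem_cons]
      constructor
      · rintro ⟨h1, h2⟩ ψ (rfl | hψ)
        · exact h1
        · exact forces_bigConj.1 h2 ψ hψ
      · intro h
        exact ⟨h φ (Or.inl rfl), forces_bigConj.2 fun ψ hψ => h ψ (Or.inr hψ)⟩

variable {X : Type} [PartialOrder X]

lemma forces_jtriple {Y : Type} [Preorder Y] {w : ℕ → Set Y} {y0 : Y}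
    (q : Ups X → ℕ) {all : List (Ups X)} (hall : ∀ U, U ∈ all)
    (hδ : Forces w y0 (jdelta q all)) (U V : Ups X) :
    Forces w y0 (jtriple q U V) := by
  have h1 : Forces w y0 (bigConj (all.map fun U => bigConj
      (all.map fun V => jtriple q U V))) := hδ.1
  have h2 := forces_bigConj.1 h1 _ (List.mem_map.2 ⟨U, hall U, rfl⟩)
  exact forces_bigConj.1 h2 _ (List.mem_map.2 ⟨V, hall V, rfl⟩)

/-- **Jankov's lemma, semantic direction (transfer)**: if a poset `Y` refutes
the Jankov formula of a finite rooted poset `X` then every formula refuted in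
`X` is refuted in `Y`. -/
lemma jankov_transfer {r : X} {hr : ∀ x, r ≤ x} (q : Ups X → ℕ)
    {all : List (Ups X)} (hall : ∀ U, U ∈ all) {Y : Type} [Preorder Y]
    {w : ℕ → Set Y} (hw : ∀ n, IsUpperSet (w n)) {y0 : Y}
    (hδ : Forces w y0 (jdelta q all))
    (hs : y0 ∉ w (q (upsTop r hr))) {φ : IForm}
    {v : ℕ → Set X} (hv : ∀ n, IsUpperSet (v n)) {x0 : X}
    (hx0 : ¬ Forces v x0 φ) : ¬ ValidIn Y φ := by
  intro hY
  set u : ℕ → Set Y := fun n => w (q ⟨v n, hv n⟩) with hu_def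
  have hu : ∀ n, IsUpperSet (u n) := fun n => hw _
  have htriple := forces_jtriple q hall hδ
  have key : ∀ (ψ : IForm) (y : Y), y0 ≤ y →
      (Forces u y ψ ↔ y ∈ w (q (fset v hv ψ))) := by
    intro ψ
    induction ψ with
    | var n => intro y hy; rfl
    | bot =>
        intro y hy
        simp only [Forces, false_iff]
        intro hmem
        have he : fset v hv IForm.bot = upsEmpty := Subtype.ext rfl
        rw [he] at hmem
        exact hδ.2.1 y hy hmem
    | and ψ1 ψ2 ih1 ih2 =>
        intro y hy
        have he : fset v hv (ψ1.and ψ2)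
            = upsInter (fset v hv ψ1) (fset v hv ψ2) := Subtype.ext rfl
        rw [he]
        constructor
        · intro h
          exact (htriple _ _).1.2 y hy ⟨(ih1 y hy).1 h.1, (ih2 y hy).1 h.2⟩
        · intro h
          have h2 := (htriple (fset v hv ψ1) (fset v hv ψ2)).1.1 y hy h
          exact ⟨(ih1 y hy).2 h2.1, (ih2 y hy).2 h2.2⟩
    | or ψ1 ψ2 ih1 ih2 =>
        intro y hy
        have he : fset v hv (ψ1.or ψ2)
            = upsUnion (fset v hv ψ1) (fset v hv ψ2) := Subtype.ext rfl
        rw [he]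
        constructor
        · intro h
          refine (htriple _ _).2.1.2 y hy ?_
          exact h.elim (fun h => Or.inl ((ih1 y hy).1 h))
            (fun h => Or.inr ((ih2 y hy).1 h))
        · intro h
          have h2 := (htriple (fset v hv ψ1) (fset v hv ψ2)).2.1.1 y hy h
          exact h2.elim (fun h => Or.inl ((ih1 y hy).2 h))
            (fun h => Or.inr ((ih2 y hy).2 h))
    | imp ψ1 ψ2 ih1 ih2 =>
        intro y hy
        have he : fset v hv (ψ1.imp ψ2)
            = upsHimp (fset v hv ψ1) (fset v hv ψ2) := Subtype.ext rfl
        rw [he]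
        constructor
        · intro h
          refine (htriple _ _).2.2.2 y hy ?_
          intro y' hy' hU
          have hy0' : y0 ≤ y' := le_trans hy hy'
          exact (ih2 y' hy0').1 (h y' hy' ((ih1 y' hy0').2 hU))
        · intro h
          have h2 := (htriple (fset v hv ψ1) (fset v hv ψ2)).2.2.1 y hy h
          intro y' hy' hψ1
          have hy0' : y0 ≤ y' := le_trans hy hy'
          exact (ih2 y' hy0').2 (h2 y' hy' ((ih1 y' hy0').1 hψ1))
  have hmono : ∀ U V : Ups X, U.1 ⊆ V.1 → ∀ y, y0 ≤ y →
      y ∈ w (q U) → y ∈ w (q V) := by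
    intro U V hUV y hy hmem
    have he : upsInter U V = U := Subtype.ext (Set.inter_eq_left.mpr hUV)
    have h1 := (htriple U V).1.1 y hy
    rw [he] at h1
    exact (h1 hmem).2
  have hforce : Forces u y0 φ := hY u hu y0
  have h1 : y0 ∈ w (q (fset v hv φ)) := (key φ y0 le_rfl).1 hforce
  have hss : (fset v hv φ).1 ⊆ (upsTop r hr).1 := by
    intro x hx
    refine ⟨trivial, fun hxr => hx0 ?_⟩
    rw [Set.mem_singleton_iff] at hxr
    exact forces_mono hv φ (hr x0) (hxr ▸ hx)
  exact hs (hmono _ _ hss y0 le_rfl h1)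

/-- If `Y` validates some formula refuted in the finite rooted poset `X`, then
`Y` validates the Jankov formula of `X`. -/
lemma validIn_jankov_of {X : Type} [Fintype X] [PartialOrder X] (r : X)
    (hr : ∀ x, r ≤ x) {Y : Type} [Preorder Y] {φ : IForm}
    (hYφ : ValidIn Y φ) (hXφ : ¬ ValidIn X φ) : ValidIn Y (jankov X r hr) := by
  obtain ⟨q, all, hq, hall, heq⟩ := jankov_spec X r hr
  rw [heq, jankovGen_eq]
  by_contra hcon
  simp only [ValidIn, not_forall] at hcon
  obtain ⟨w, hw, y1, hy1⟩ := hcon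
  simp only [Forces, not_forall] at hy1
  obtain ⟨y0, hy01, hδ, hs⟩ := hy1
  simp only [ValidIn, not_forall] at hXφ
  obtain ⟨v, hv, x0, hx0⟩ := hXφ
  exact jankov_transfer q hall hw hδ hs hv hx0 hYφ

end JankovSemantic

section JankovRefute

variable {X : Type} [PartialOrder X]

/-- Generic criterion for a point to force `δ`. -/
lemma forces_jdelta_of {Y : Type} [Preorder Y] (q : Ups X → ℕ)
    (all : List (Ups X)) (u : ℕ → Set Y) (y0 : Y) (P : Ups X → Y → Prop)
    (hvar : ∀ U y, y0 ≤ y → (y ∈ u (q U) ↔ P U y))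
    (hinter : ∀ U V y, y0 ≤ y → (P (upsInter U V) y ↔ P U y ∧ P V y))
    (hunion : ∀ U V y, y0 ≤ y → (P (upsUnion U V) y ↔ P U y ∨ P V y))
    (hhimp : ∀ U V y, y0 ≤ y →
      (P (upsHimp U V) y ↔ ∀ y', y ≤ y' → P U y' → P V y'))
    (hempty : ∀ y, y0 ≤ y → ¬ P upsEmpty y) :
    Forces u y0 (jdelta q all) := by
  constructor
  · rw [forces_bigConj]
    intro χ hχ
    obtain ⟨U, hU, rfl⟩ := List.mem_map.1 hχ
    rw [forces_bigConj]
    intro χ' hχ'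
    obtain ⟨V, hV, rfl⟩ := List.mem_map.1 hχ'
    refine ⟨⟨?_, ?_⟩, ⟨?_, ?_⟩, ⟨?_, ?_⟩⟩
    · intro y hy h
      have := (hinter U V y hy).1 ((hvar _ y hy).1 h)
      exact ⟨(hvar U y hy).2 this.1, (hvar V y hy).2 this.2⟩
    · intro y hy h
      exact (hvar _ y hy).2 ((hinter U V y hy).2
        ⟨(hvar U y hy).1 h.1, (hvar V y hy).1 h.2⟩)
    · intro y hy h
      have := (hunion U V y hy).1 ((hvar _ y hy).1 h)
      exact this.elim (fun h => Or.inl ((hvar U y hy).2 h))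
        (fun h => Or.inr ((hvar V y hy).2 h))
    · intro y hy h
      refine (hvar _ y hy).2 ((hunion U V y hy).2 ?_)
      exact h.elim (fun h => Or.inl ((hvar U y hy).1 h))
        (fun h => Or.inr ((hvar V y hy).1 h))
    · intro y hy h y' hy' hU
      have hy0' : y0 ≤ y' := le_trans hy hy'
      have := (hhimp U V y hy).1 ((hvar _ y hy).1 h)
      exact (hvar V y' hy0').2 (this y' hy' ((hvar U y' hy0').1 hU))
    · intro y hy h
      refine (hvar _ y hy).2 ((hhimp U V y hy).2 ?_)
      intro y' hy' hU
      have hy0' : y0 ≤ y' := le_trans hy hy'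
      exact (hvar V y' hy0').1 (h y' hy' ((hvar U y' hy0').2 hU))
  · constructor
    · intro y hy h
      exact hempty y hy ((hvar _ y hy).1 h)
    · intro y hy h
      exact h.elim

/-- A finite rooted poset refutes its own Jankov formula. -/
lemma not_validIn_jankov_self (X : Type) [Fintype X] [PartialOrder X] (r : X)
    (hr : ∀ x, r ≤ x) : ¬ ValidIn X (jankov X r hr) := by
  obtain ⟨q, all, hq, hall, heq⟩ := jankov_spec X r hr
  rw [heq, jankovGen_eq]
  intro hval
  set u : ℕ → Set X := fun n => {x | ∃ U : Ups X, q U = n ∧ x ∈ U.1} with hu_def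
  have hu : ∀ n, IsUpperSet (u n) := by
    rintro n x y hxy ⟨U, hU, hx⟩
    exact ⟨U, hU, U.2 hxy hx⟩
  have hvar : ∀ (U : Ups X) (y : X), y ∈ u (q U) ↔ y ∈ U.1 := by
    intro U y
    constructor
    · rintro ⟨U', hU', hy⟩
      rwa [hq hU'] at hy
    · intro hy
      exact ⟨U, rfl, hy⟩
  have hδ : Forces u r (jdelta q all) := by
    refine forces_jdelta_of q all u r (fun U y => y ∈ U.1)
      (fun U y _ => hvar U y) (fun U V y _ => Iff.rfl) (fun U V y _ => Iff.rfl)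
      (fun U V y _ => Iff.rfl) (fun y _ h => h)
  have := hval u hu r r le_rfl hδ
  have hmem : r ∈ (upsTop r hr).1 := (hvar _ r).1 this
  exact hmem.2 rfl

/-- Refutation at a point restricts to the upset generated by that point. -/
lemma not_validIn_restrict {Y : Type} [Preorder Y] {φ : IForm} {v : ℕ → Set Y}
    (hv : ∀ n, IsUpperSet (v n)) {y0 : Y} (h : ¬ Forces v y0 φ) :
    ¬ ValidIn {y : Y // y0 ≤ y} φ := by
  intro hval
  set v' : ℕ → Set {y : Y // y0 ≤ y} := fun n => Subtype.val ⁻¹' v n with hv'_def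
  have hv' : ∀ n, IsUpperSet (v' n) := fun n x y hxy hx => hv n hxy hx
  have key : ∀ (ψ : IForm) (x : {y : Y // y0 ≤ y}),
      Forces v' x ψ ↔ Forces v x.1 ψ := by
    intro ψ
    induction ψ with
    | var n => intro x; rfl
    | bot => intro x; rfl
    | and ψ1 ψ2 ih1 ih2 => intro x; exact and_congr (ih1 x) (ih2 x)
    | or ψ1 ψ2 ih1 ih2 => intro x; exact or_congr (ih1 x) (ih2 x)
    | imp ψ1 ψ2 ih1 ih2 =>
        intro x
        constructor
        · intro h y hy hψ1
          have hy0 : y0 ≤ y := le_trans x.2 hy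
          exact (ih2 ⟨y, hy0⟩).1 (h ⟨y, hy0⟩ hy ((ih1 ⟨y, hy0⟩).2 hψ1))
        · intro h y hy hψ1
          exact (ih2 y).2 (h y.1 hy ((ih1 y).1 hψ1))
  exact h ((key φ ⟨y0, le_rfl⟩).1 (hval v' hv' _))

/-- The Jankov formula of the subframe generated by a point is refuted in the
ambient poset. -/
lemma not_validIn_jankov_up {Y : Type} [PartialOrder Y] (y0 : Y)
    (i1 : Fintype {y : Y // y0 ≤ y}) :
    ¬ ValidIn Y (@jankov {y : Y // y0 ≤ y} i1 _ ⟨y0, le_rfl⟩ (fun x => x.2)) := by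
  obtain ⟨q, all, hq, hall, heq⟩ :=
    @jankov_spec {y : Y // y0 ≤ y} i1 _ ⟨y0, le_rfl⟩ (fun x => x.2)
  rw [heq, jankovGen_eq]
  intro hval
  set P : Ups {y : Y // y0 ≤ y} → Y → Prop := fun U y => ∃ h : y0 ≤ y, (⟨y, h⟩ : {y : Y // y0 ≤ y}) ∈ U.1
    with hP_def
  set u : ℕ → Set Y := fun n => {y | ∃ U : Ups {y : Y // y0 ≤ y}, q U = n ∧ P U y} with hu_def
  have hu : ∀ n, IsUpperSet (u n) := by
    rintro n x y hxy ⟨U, hU, hx, hmem⟩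
    exact ⟨U, hU, le_trans hx hxy, U.2 (show (⟨x, hx⟩ : {y : Y // y0 ≤ y}) ≤ ⟨y, _⟩ from hxy) hmem⟩
  have hvar : ∀ (U : Ups {y : Y // y0 ≤ y}) (y : Y), y ∈ u (q U) ↔ P U y := by
    intro U y
    constructor
    · rintro ⟨U', hU', hy⟩
      rwa [hq hU'] at hy
    · intro hy
      exact ⟨U, rfl, hy⟩
  have hδ : Forces u y0 (jdelta q all) := by
    refine forces_jdelta_of q all u y0 P (fun U y _ => hvar U y) ?_ ?_ ?_ ?_
    · rintro U V y hy
      constructor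
      · rintro ⟨h, hm⟩; exact ⟨⟨h, hm.1⟩, ⟨h, hm.2⟩⟩
      · rintro ⟨⟨h, h1⟩, ⟨h', h2⟩⟩; exact ⟨h, h1, h2⟩
    · rintro U V y hy
      constructor
      · rintro ⟨h, hm⟩
        exact hm.elim (fun hm => Or.inl ⟨h, hm⟩) (fun hm => Or.inr ⟨h, hm⟩)
      · rintro (⟨h, hm⟩ | ⟨h, hm⟩)
        · exact ⟨h, Or.inl hm⟩
        · exact ⟨h, Or.inr hm⟩
    · rintro U V y hy
      constructor
      · rintro ⟨h, hm⟩ y' hy' ⟨h', hU⟩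
        exact ⟨h', hm ⟨y', h'⟩ (show (⟨y, h⟩ : {y : Y // y0 ≤ y}) ≤ ⟨y', h'⟩ from hy') hU⟩
      · intro hall'
        refine ⟨hy, ?_⟩
        rintro ⟨y', h'⟩ hle hU
        obtain ⟨h'', hV⟩ := hall' y' hle ⟨h', hU⟩
        exact hV
    · rintro y hy ⟨h, hm⟩
      exact hm
  have := hval u hu y0 y0 le_rfl hδ
  obtain ⟨h, hmem⟩ := (hvar _ y0).1 this
  exact hmem.2 rfl
end JankovRefute

section LogicLemmas

lemma superIntuitionistic_IPCPlus (Ax : Set IForm) :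
    SuperIntuitionistic (IPCPlus Ax) := by
  refine ⟨?_, ?_, ?_⟩
  · intro φ h L hL hAx; exact hL.1 φ h
  · intro φ ψ h1 h2 L hL hAx; exact hL.2.1 φ ψ (h1 L hL hAx) (h2 L hL hAx)
  · intro φ σ h L hL hAx; exact hL.2.2 φ σ (h L hL hAx)

lemma subset_IPCPlus {Ax : Set IForm} : Ax ⊆ IPCPlus Ax :=
  fun φ hφ L hL hAx => hAx hφ

lemma IPCPlus_subset {Ax L : Set IForm} (hL : SuperIntuitionistic L)
    (hAx : Ax ⊆ L) : IPCPlus Ax ⊆ L :=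
  fun φ hφ => hφ L hL hAx

lemma subset_LPlus {L : Set IForm} : L ⊆ LPlus L :=
  fun φ hφ X _ _ h => h φ hφ

lemma superIntuitionistic_LPlus (L : Set IForm) :
    SuperIntuitionistic (LPlus L) := by
  refine ⟨?_, ?_, ?_⟩
  · intro φ h X _ _ _; exact ipc_validIn h
  · intro φ ψ h1 h2 X _ _ hX v hv x
    exact h1 X hX v hv x x le_rfl (h2 X hX v hv x)
  · intro φ σ h X _ _ hX
    exact validIn_subst (h X hX) σ

lemma sameFin_LPlus (L : Set IForm) : SameFinPosets L (LPlus L) := by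
  intro X _ _
  constructor
  · intro h φ hφ; exact hφ X h
  · intro h φ hφ; exact h φ (subset_LPlus hφ)

lemma LPlus_congr {L L' : Set IForm} (h : SameFinPosets L L') :
    LPlus L = LPlus L' := by
  ext φ
  constructor
  · intro hφ X _ _ hX; exact hφ X ((h X).2 hX)
  · intro hφ X _ _ hX; exact hφ X ((h X).1 hX)

end LogicLemmas

/-- The degree of fmp is `1` iff every logic in the span equals `L`. -/
lemma degFmp_eq_one_iff_unique (L : Set IForm) (hL : SuperIntuitionistic L) :
    degFmp L = 1 ↔ ∀ L' ∈ fmpSpan L, L' = L := by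
  have hself : L ∈ fmpSpan L := ⟨hL, fun X _ _ => Iff.rfl⟩
  rw [degFmp, Cardinal.eq_one_iff_unique]
  constructor
  · rintro ⟨hsub, -⟩ L' hL'
    have := hsub.elim ⟨L', hL'⟩ ⟨L, hself⟩
    exact congrArg Subtype.val this
  · intro h
    exact ⟨⟨fun a b => Subtype.ext (by rw [h _ a.2, h _ b.2])⟩, ⟨⟨L, hself⟩⟩⟩
/-- **Theorem.** An si-logic `L` has degree of fmp equal to `1` iff `L` has the
finite model property and is axiomatizable by Jankov formulas. -/
theorem degFmp_eq_one_iff (L : Set IForm) (hL : SuperIntuitionistic L) :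
    degFmp L = 1 ↔ HasFMP L ∧ JankovAxiomatizable L := by
  rw [degFmp_eq_one_iff_unique L hL]
  constructor
  · intro huniq
    have hfmp : HasFMP L :=
      (huniq (LPlus L) ⟨superIntuitionistic_LPlus L, sameFin_LPlus L⟩).symm
    refine ⟨hfmp, ?_⟩
    -- the set of Jankov axioms: Jankov formulas of finite rooted posets
    -- refuting `L`
    set Ax : Set IForm := {φ | ∃ (X : Type) (i1 : Fintype X)
      (i2 : PartialOrder X) (r : X) (hr : ∀ x : X, i2.le r x),
      ¬ @ValidLogic X i2.toPreorder L ∧ φ = @jankov X i1 i2 r hr} with hAx_def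
    have hMspan : IPCPlus Ax ∈ fmpSpan L := by
      refine ⟨superIntuitionistic_IPCPlus Ax, ?_⟩
      intro Y _ _
      constructor
      · -- Y ⊨ L → Y ⊨ IPC + Ax
        intro hYL
        have : IPCPlus Ax ⊆ {φ | ValidIn Y φ} := by
          refine IPCPlus_subset (superIntuitionistic_log Y) ?_
          rintro φ ⟨X, i1, i2, r, hr, hnv, rfl⟩
          simp only [ValidLogic, not_forall] at hnv
          obtain ⟨ψ, hψL, hψX⟩ := hnv
          exact validIn_jankov_of r hr (hYL ψ hψL) hψX
        intro φ hφ
        exact this hφ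
      · -- Y ⊨ IPC + Ax → Y ⊨ L
        intro hYM φ hφ
        by_contra hc
        simp only [ValidIn, not_forall] at hc
        obtain ⟨v, hv, y0, hy0⟩ := hc
        haveI i1 : Fintype {y : Y // y0 ≤ y} := Fintype.ofFinite _
        have hnvX : ¬ ValidLogic {y : Y // y0 ≤ y} L :=
          fun h => not_validIn_restrict hv hy0 (h φ hφ)
        have hmem : jankov {y : Y // y0 ≤ y} ⟨y0, le_rfl⟩ (fun x => x.2) ∈ Ax :=
          ⟨{y : Y // y0 ≤ y}, i1, inferInstance, ⟨y0, le_rfl⟩, fun x => x.2,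
            hnvX, rfl⟩
        exact not_validIn_jankov_up y0 i1 (hYM _ (subset_IPCPlus hmem))
    have hML : IPCPlus Ax = L := huniq _ hMspan
    exact ⟨Ax, fun φ ⟨X, i1, i2, r, hr, _, h⟩ => ⟨X, i1, i2, r, hr, h⟩, hML.symm⟩
  · rintro ⟨hfmp, Ax, hAxJ, hLAx⟩ L' ⟨hL', hsame⟩
    refine Set.Subset.antisymm ?_ ?_
    · -- L' ⊆ L via the fmp of L
      intro φ hφ
      have h1 : φ ∈ LPlus L' := fun X _ _ h => h φ hφ
      rw [← LPlus_congr hsame] at h1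
      rw [hfmp]
      exact h1
    · -- L ⊆ L' via the syntactic Jankov lemma
      rw [hLAx]
      refine IPCPlus_subset hL' ?_
      intro ψ hψ
      obtain ⟨X, i1, i2, r, hr, rfl⟩ := hAxJ ψ hψ
      by_contra hne
      have hXL' : ValidLogic X L' := by
        intro χ hχ
        by_contra hc
        simp only [ValidIn, not_forall] at hc
        obtain ⟨v, hv, x0, hx0⟩ := hc
        exact hne (jankov_mem_of_refutes r hr hL' hχ v hv x0 hx0)
      have hXL : ValidLogic X L := (hsame X).2 hXL'
      have : ValidIn X (jankov X r hr) := hXL _ (hLAx ▸ subset_IPCPlus hψ)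
      exact not_validIn_jankov_self X r hr this
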